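/- A W-graph satisfies mean payoff if and only if it does not contain any negative cycle. -/

import Mathlib

open Filter


/-- A finite path: a list of consecutive edges, all belonging to `E`,
starting at `u` (when nonempty). -/
def FinPath {V : Type} (E : Set (V × ℤ × V)) (u : V) (p : List (V × ℤ × V)) : Prop :=
  (∀ e ∈ p, e ∈ E) ∧ List.Chain' (fun e e' => e.2.2 = e'.1) p ∧
    ∀ h : p ≠ [], (p.head h).1 = u

/-- The last vertex of a finite path starting at `u` (which is `u` itself for the empty path). -/
def lastV {V : Type} (u : V) (p : List (V × ℤ × V)) : V :=
  (p.getLastD (u, 0, u)).2.2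

/-- An infinite path: a sequence of consecutive edges, all belonging to `E`. -/
def InfPath {V : Type} (E : Set (V × ℤ × V)) (π : ℕ → V × ℤ × V) : Prop :=
  (∀ i, π i ∈ E) ∧ ∀ i, (π i).2.2 = (π (i + 1)).1

/-- The total weight of a finite path. -/
def pathWeight {V : Type} (p : List (V × ℤ × V)) : ℤ :=
  (p.map fun e => e.2.1).sum

/-- A sequence of integer weights satisfies mean payoff if the liminf of the
averages of its prefixes is nonnegative. -/
def MeanPayoffSeq (w : ℕ → ℤ) : Prop :=
  0 ≤ Filter.atTop.liminf (fun ℓ : ℕ => (∑ i ∈ Finset.range ℓ, (w i : ℝ)) / (ℓ : ℝ))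

/-- A graph (given by its edge set) satisfies mean payoff if all its infinite paths do. -/
def SatMP {V : Type} (E : Set (V × ℤ × V)) : Prop :=
  ∀ π : ℕ → V × ℤ × V, InfPath E π → MeanPayoffSeq (fun i => (π i).2.1)

/-- A cycle: a nonempty finite path whose first and last vertices coincide. -/
def IsCycle {V : Type} (E : Set (V × ℤ × V)) (p : List (V × ℤ × V)) : Prop :=
  p ≠ [] ∧ ∃ v, FinPath E v p ∧ lastV v p = v

/-- A `W`-graph: a finite set of vertices, edges labelled by weights in `W`,
and an initial vertex from which every vertex is reachable. -/
structure WGraph (W : Finset ℤ) where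
  V : Type
  fin : Fintype V
  E : Set (V × ℤ × V)
  init : V
  wt : ∀ e ∈ E, e.2.1 ∈ W
  reach : ∀ v : V, ∃ p, FinPath E init p ∧ lastV init p = v

attribute [instance] WGraph.fin

lemma pathWeight_append (a b : List (V × ℤ × V)) :
    pathWeight (a ++ b) = pathWeight a + pathWeight b := by
  simp [pathWeight]

lemma lastV_append (u : V) (a b : List (V × ℤ × V)) :
    lastV u (a ++ b) = lastV (lastV u a) b := by
  cases b with
  | nil => simp [lastV]
  | cons x xs =>
    simp [lastV, List.getLast?_append, List.getLast?_eq_getLast (List.cons_ne_nil x xs)]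

lemma lastV_cons (u : V) (e : V × ℤ × V) (p : List (V × ℤ × V)) :
    lastV u (e :: p) = lastV e.2.2 p := by
  cases p with
  | nil => simp [lastV]
  | cons y ys =>
    simp [lastV, List.getLast?_eq_getLast (List.cons_ne_nil y ys)]

lemma finPath_cons {e : V × ℤ × V} {l : List (V × ℤ × V)} :
    FinPath E u (e :: l) ↔ e ∈ E ∧ e.1 = u ∧ FinPath E e.2.2 l := by
  unfold FinPath
  unfold List.Chain'
  rw [List.isChain_cons]
  constructor
  · rintro ⟨hE, ⟨hlink, hch⟩, hhd⟩
    refine ⟨hE e (by simp), hhd (by simp), fun e' he' => hE e' (by simp [he']), hch, ?_⟩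
    intro h
    exact (hlink _ (by simp [List.head?_eq_head h])).symm
  · rintro ⟨heE, he1, hE, hch, hhd⟩
    refine ⟨?_, ⟨?_, hch⟩, fun _ => he1⟩
    · intro e' he'
      rcases List.mem_cons.1 he' with h | h
      · exact h ▸ heE
      · exact hE _ h
    · intro y hy
      have hl : l ≠ [] := by rintro rfl; simp at hy
      rw [List.head?_eq_head hl] at hy
      rw [← Option.some_inj.1 hy] at *
      exact (hhd hl).symm

lemma finPath_nil : FinPath E u [] := by
  refine ⟨by simp, by exact List.IsChain.nil, by simp⟩

lemma finPath_append {a b : List (V × ℤ × V)} :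
    FinPath E u (a ++ b) ↔ FinPath E u a ∧ FinPath E (lastV u a) b := by
  induction a generalizing u with
  | nil => simpa [lastV] using fun _ => finPath_nil
  | cons e a' ih =>
    simp only [List.cons_append, finPath_cons, lastV_cons, ih, and_assoc]

lemma sum_lb : ∀ (l : List ℤ) (M : ℤ), (∀ x ∈ l, -M ≤ x) → -((l.length : ℤ) * M) ≤ l.sum := by
  intro l
  induction l with
  | nil => simp
  | cons x xs ih =>
    intro M h
    have h1 := ih M (fun y hy => h y (by simp [hy]))
    have h2 := h x (by simp)
    simp only [List.sum_cons, List.length_cons]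
    push_cast
    linarith

lemma weight_lb [Fintype V] {M : ℤ}
    (hw : ∀ e ∈ E, -M ≤ e.2.1)
    (hnc : ¬ ∃ p, IsCycle E p ∧ pathWeight p < 0) (hM : 0 ≤ M) :
    ∀ (n : ℕ) (u : V) (p : List (V × ℤ × V)), p.length = n → FinPath E u p →
      -((Fintype.card V : ℤ) * M) ≤ pathWeight p := by
  intro n
  induction n using Nat.strong_induction_on with
  | _ n ih =>
  intro u p hlen hp
  by_cases hshort : p.length ≤ Fintype.card V
  · have h1 : -((p.length : ℤ) * M) ≤ pathWeight p := by
      have hsb := sum_lb (p.map fun e => e.2.1) M (fun x hx => by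
        obtain ⟨e, he, rfl⟩ := List.mem_map.1 hx
        exact hw e (hp.1 e he))
      simpa [pathWeight] using hsb
    have : (p.length : ℤ) ≤ (Fintype.card V : ℤ) := by exact_mod_cast hshort
    nlinarith
  · push_neg at hshort
    obtain ⟨k₁, k₂, hne, heq⟩ := Fintype.exists_ne_map_eq_of_card_lt
      (fun k : Fin (Fintype.card V + 1) => lastV u (p.take k)) (by simp)
    have key : ∃ i j : ℕ, i < j ∧ j ≤ Fintype.card V ∧
        lastV u (p.take i) = lastV u (p.take j) := by
      rcases Ne.lt_or_gt hne with h | h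
      · exact ⟨k₁, k₂, h, Nat.lt_succ_iff.mp k₂.isLt, heq⟩
      · exact ⟨k₂, k₁, h, Nat.lt_succ_iff.mp k₁.isLt, heq.symm⟩
    obtain ⟨i, j, hij, hjle, hveq⟩ := key
    set a := p.take i with ha
    set c := (p.drop i).take (j - i) with hc
    set b := p.drop j with hb
    have hac : p.take j = a ++ c := by
      rw [ha, hc, ← List.take_add]
      congr 1
      omega
    have hdecomp : p = (a ++ c) ++ b := by
      rw [← hac, hb, List.take_append_drop]
    rw [hdecomp, finPath_append, finPath_append] at hp
    obtain ⟨⟨hpa, hpc⟩, hpb⟩ := hp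
    have hjlt : j < p.length := lt_of_le_of_lt hjle hshort
    have hcne : c ≠ [] := by
      rw [hc, ← List.length_pos_iff]
      simp only [List.length_take, List.length_drop]
      omega
    have hlastc : lastV (lastV u a) c = lastV u a := by
      rw [← lastV_append, ← hac, ← hveq]
    have hwc : 0 ≤ pathWeight c := by
      by_contra hlt
      exact hnc ⟨c, ⟨hcne, lastV u a, hpc, hlastc⟩, by omega⟩
    have hpb' : FinPath E (lastV u a) b := by
      rwa [lastV_append, hlastc] at hpb
    have hp' : FinPath E u (a ++ b) := finPath_append.2 ⟨hpa, hpb'⟩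
    have hlen' : (a ++ b).length < n := by
      rw [List.length_append, ha, hb, List.length_take, List.length_drop, ← hlen]
      omega
    have hih := ih _ hlen' u (a ++ b) rfl hp'
    rw [hdecomp, pathWeight_append, pathWeight_append]
    rw [pathWeight_append] at hih
    omega

lemma infPath_prefix {π : ℕ → V × ℤ × V} (hπ : InfPath E π) (ℓ : ℕ) :
    FinPath E (π 0).1 ((List.range ℓ).map π) := by
  refine ⟨?_, ?_, ?_⟩
  · intro e he
    obtain ⟨i, _, rfl⟩ := List.mem_map.1 he
    exact hπ.1 i
  · unfold List.Chain'
    rw [List.isChain_iff_getElem]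
    intro k hk
    simp only [List.getElem_map, List.getElem_range]
    exact hπ.2 _
  · intro h
    rw [List.head_eq_getElem]
    simp

lemma pathWeight_range (π : ℕ → V × ℤ × V) (ℓ : ℕ) :
    pathWeight ((List.range ℓ).map π) = ∑ i ∈ Finset.range ℓ, (π i).2.1 := by
  induction ℓ with
  | zero => simp [pathWeight]
  | succ m ih =>
    rw [List.range_succ, Finset.sum_range_succ, ← ih]
    simp [pathWeight]

lemma satMP_of_no_neg_cycle {W : Finset ℤ} (G : WGraph W)
    (hnc : ¬ ∃ p, IsCycle G.E p ∧ pathWeight p < 0) : SatMP G.E := by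
  intro π hπ
  unfold MeanPayoffSeq
  set M : ℕ := W.sup fun w => (-w).toNat with hM
  have hwlb : ∀ e ∈ G.E, -(M : ℤ) ≤ e.2.1 := by
    intro e he
    have h1 : -e.2.1 ≤ ((-e.2.1).toNat : ℤ) := Int.self_le_toNat _
    have h2 : ((-e.2.1).toNat : ℤ) ≤ (M : ℤ) := by
      exact_mod_cast Finset.le_sup (f := fun w => (-w).toNat) (G.wt e he)
    linarith
  set C : ℤ := (Fintype.card G.V : ℤ) * (M : ℤ) with hC
  have hC0 : 0 ≤ C := by positivity
  have hS : ∀ ℓ, -C ≤ ∑ i ∈ Finset.range ℓ, (π i).2.1 := by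
    intro ℓ
    have h := weight_lb hwlb hnc (by positivity) _ (π 0).1 _ rfl (infPath_prefix hπ ℓ)
    rwa [pathWeight_range] at h
  set M2 : ℕ := W.sup fun w => w.toNat with hM2
  have hwub : ∀ e ∈ G.E, e.2.1 ≤ (M2 : ℤ) := by
    intro e he
    have h1 : e.2.1 ≤ (e.2.1.toNat : ℤ) := Int.self_le_toNat _
    have h2 : (e.2.1.toNat : ℤ) ≤ (M2 : ℤ) := by
      exact_mod_cast Finset.le_sup (f := fun w => w.toNat) (G.wt e he)
    linarith
  set avg : ℕ → ℝ := fun ℓ => (∑ i ∈ Finset.range ℓ, ((π i).2.1 : ℝ)) / (ℓ : ℝ) with havg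
  have hub : ∀ ℓ, avg ℓ ≤ (M2 : ℝ) := by
    intro ℓ
    rcases Nat.eq_zero_or_pos ℓ with rfl | hpos
    · simp [havg]
    · rw [havg]
      rw [div_le_iff₀ (by exact_mod_cast hpos)]
      calc ∑ i ∈ Finset.range ℓ, ((π i).2.1 : ℝ) ≤ ∑ _i ∈ Finset.range ℓ, (M2 : ℝ) := by
            apply Finset.sum_le_sum
            intro i _
            exact_mod_cast hwub _ (hπ.1 i)
        _ = (M2 : ℝ) * ℓ := by simp [mul_comm]
  have hlb : ∀ ℓ : ℕ, -(C : ℝ) / (ℓ : ℝ) ≤ avg ℓ := by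
    intro ℓ
    rcases Nat.eq_zero_or_pos ℓ with rfl | hpos
    · simp [havg]
    · rw [havg]
      apply (div_le_div_iff_of_pos_right (by exact_mod_cast hpos)).2
      have := hS ℓ
      push_cast
      exact_mod_cast this
  have h0 : Filter.Tendsto (fun ℓ : ℕ => -(C : ℝ) / (ℓ : ℝ)) atTop (nhds 0) :=
    tendsto_const_div_atTop_nhds_zero_nat _
  have hbdd : IsBoundedUnder (· ≥ ·) atTop (fun ℓ : ℕ => -(C : ℝ) / (ℓ : ℝ)) :=
    h0.isBoundedUnder_ge
  have hcob : IsCoboundedUnder (· ≥ ·) atTop avg :=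
    (isBoundedUnder_of ⟨(M2 : ℝ), hub⟩).isCoboundedUnder_ge
  have hfin := liminf_le_liminf (Filter.Eventually.of_forall hlb) hbdd hcob
  rw [h0.liminf_eq] at hfin
  exact hfin

lemma lastV_eq_getLast {p : List (V × ℤ × V)} (h : p ≠ []) (u : V) :
    lastV u p = (p.getLast h).2.2 := by
  simp [lastV, List.getLast?_eq_getLast h]

lemma not_satMP_of_neg_cycle {p : List (V × ℤ × V)} (hcyc : IsCycle E p)
    (hneg : pathWeight p < 0) (M : ℤ) (hM : 0 ≤ M) (hwM : ∀ e ∈ p, -M ≤ e.2.1) :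
    ¬ SatMP E := by
  obtain ⟨hne, v, hfp, hlast⟩ := hcyc
  set n := p.length with hn
  have hn0 : 0 < n := List.length_pos_iff.2 hne
  set π : ℕ → V × ℤ × V := fun i => p[i % n]'(Nat.mod_lt i hn0) with hπdef
  have hmem : ∀ i, π i ∈ p := fun i => List.getElem_mem _
  have hinf : InfPath E π := by
    constructor
    · intro i; exact hfp.1 _ (hmem i)
    · intro i
      rcases Nat.lt_or_ge (i % n + 1) n with h | h
      · have h2 : (i + 1) % n = i % n + 1 := by
          rw [← Nat.mod_add_mod, Nat.mod_eq_of_lt h]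
        have hchain := List.isChain_iff_getElem.1 hfp.2.1 (i % n) (by omega)
        have e1 : π (i + 1) = p[i % n + 1]'(by omega) := by
          simp only [hπdef, h2]
        rw [e1]
        convert hchain using 2
      · have hin : i % n = n - 1 := by have := Nat.mod_lt i hn0; omega
        have h2 : (i + 1) % n = 0 := by
          rw [← Nat.mod_add_mod, hin]
          have hsub : n - 1 + 1 = n := by omega
          rw [hsub, Nat.mod_self]
        have e1 : (π i).2.2 = v := by
          have hg : p.getLast hne = p[n - 1]'(by omega) := List.getLast_eq_getElem _
          simp only [hπdef, hin]
          rw [← hg, ← lastV_eq_getLast hne v, hlast]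
        have e2 : (π (i + 1)).1 = v := by
          have hh : p.head hne = p[0]'(by omega) := List.head_eq_getElem _
          simp only [hπdef, h2]
          rw [← hh]
          exact hfp.2.2 hne
        rw [e1, e2]
  have hmap : (List.range n).map π = p := by
    apply List.ext_getElem (by simp [hn])
    intro i h1 h2
    simp only [List.getElem_map, List.getElem_range, hπdef]
    congr 1
    exact Nat.mod_eq_of_lt h2
  have hpw : ∑ j ∈ Finset.range n, (π j).2.1 = pathWeight p := by
    rw [← pathWeight_range, hmap]
  have hksum : ∀ k, ∑ i ∈ Finset.range (k * n), (π i).2.1 = k * pathWeight p := by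
    intro k
    induction k with
    | zero => simp
    | succ m ih =>
      have hmn : (m + 1) * n = m * n + n := by ring
      rw [hmn, Finset.sum_range_add, ih]
      have hshift : ∀ j ∈ Finset.range n, (π (m * n + j)).2.1 = (π j).2.1 := by
        intro j _
        have hmod : (m * n + j) % n = j % n := by
          rw [mul_comm]
          exact Nat.mul_add_mod n m j
        simp only [hπdef, hmod]
      rw [Finset.sum_congr rfl hshift, hpw]
      push_cast
      ring
  intro hsat
  set avg : ℕ → ℝ := fun ℓ => (∑ i ∈ Finset.range ℓ, ((π i).2.1 : ℝ)) / (ℓ : ℝ) with havg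
  have hmp : 0 ≤ Filter.atTop.liminf avg := hsat π hinf
  have hfreq : ∃ᶠ ℓ in (Filter.atTop : Filter ℕ), avg ℓ ≤ (pathWeight p : ℝ) / (n : ℝ) := by
    rw [Filter.frequently_atTop]
    intro N
    refine ⟨(N + 1) * n, ?_, ?_⟩
    · have := Nat.le_mul_of_pos_right (N + 1) hn0
      omega
    · apply le_of_eq
      have h2 : (∑ i ∈ Finset.range ((N + 1) * n), ((π i).2.1 : ℝ))
          = ((N : ℝ) + 1) * (pathWeight p : ℝ) := by
        have h1 := congrArg (fun z : ℤ => (z : ℝ)) (hksum (N + 1))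
        push_cast at h1
        simpa using h1
      rw [havg]
      simp only
      rw [h2]
      have h3 : (((N + 1) * n : ℕ) : ℝ) = ((N : ℝ) + 1) * (n : ℝ) := by push_cast; ring
      rw [h3, mul_div_mul_left _ _ (by positivity : (N : ℝ) + 1 ≠ 0)]
  have hbdd : IsBoundedUnder (· ≥ ·) (Filter.atTop : Filter ℕ) avg := by
    apply isBoundedUnder_of
    refine ⟨-(M : ℝ), fun ℓ => ?_⟩
    rcases Nat.eq_zero_or_pos ℓ with rfl | hpos
    · simp [havg]
      exact_mod_cast hM
    · have hℓ : (0 : ℝ) < ℓ := by exact_mod_cast hpos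
      rw [havg]
      simp only [ge_iff_le]
      rw [le_div_iff₀ hℓ]
      calc -(M : ℝ) * ℓ = ∑ _i ∈ Finset.range ℓ, -(M : ℝ) := by
            simp [Finset.sum_const, nsmul_eq_mul]
            ring
        _ ≤ ∑ i ∈ Finset.range ℓ, ((π i).2.1 : ℝ) :=
            Finset.sum_le_sum fun i _ => by exact_mod_cast hwM _ (hmem i)
  have hle := liminf_le_of_frequently_le hfreq hbdd
  have hltz : (pathWeight p : ℝ) / (n : ℝ) < 0 :=
    div_neg_of_neg_of_pos (by exact_mod_cast hneg) (by exact_mod_cast hn0)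
  linarith

/-- a `W`-graph satisfies mean payoff if and only if it does not
contain any negative cycle. -/
theorem satMP_iff_no_negative_cycle {W : Finset ℤ} (G : WGraph W) :
    SatMP G.E ↔ ¬ ∃ p, IsCycle G.E p ∧ pathWeight p < 0 := by
  constructor
  · intro hsat
    rintro ⟨p, hcyc, hneg⟩
    obtain ⟨hne, v, hfp, hlast⟩ := hcyc
    set M : ℕ := W.sup fun w => (-w).toNat with hM
    have hwM : ∀ e ∈ p, -(M : ℤ) ≤ e.2.1 := by
      intro e he
      have heE : e ∈ G.E := hfp.1 e he
      have h1 : -e.2.1 ≤ ((-e.2.1).toNat : ℤ) := Int.self_le_toNat _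
      have h2 : ((-e.2.1).toNat : ℤ) ≤ (M : ℤ) := by
        exact_mod_cast Finset.le_sup (f := fun w => (-w).toNat) (G.wt e heE)
      linarith
    exact not_satMP_of_neg_cycle ⟨hne, v, hfp, hlast⟩ hneg M (by positivity) hwM hsat
  · exact satMP_of_no_neg_cycle G
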